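/- Let f : ℝ → ℝ be continuous with primitive F(t) = ∫₀ᵗ f(τ)dτ, and suppose there exists θ > 0 such that 0 < θ·F(t) ≤ f(t)·t for all t ≠ 0. Then there exists a constant C > 0 such that F(t) ≥ C·|t|^θ for all |t| ≥ 1. -/

import Mathlib

open Set Filter intervalIntegral

lemma stmt_8_aux (f F : ℝ → ℝ) (θ : ℝ) (hθ : 0 < θ)
    (hf : Continuous f)
    (hF : ∀ t : ℝ, F t = ∫ τ in (0:ℝ)..t, f τ)
    (hAR : ∀ t : ℝ, t ≠ 0 → 0 < θ * F t ∧ θ * F t ≤ f t * t) :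
    ∀ t : ℝ, 1 ≤ t → F 1 * t ^ θ ≤ F t := by
  have hFeq : F = fun t => ∫ τ in (0:ℝ)..t, f τ := funext hF
  have hFd : ∀ s : ℝ, HasDerivAt F (f s) s := by
    intro s
    rw [hFeq]
    exact (hf.integral_hasStrictDerivAt 0 s).hasDerivAt
  set G : ℝ → ℝ := fun s => F s * s ^ (-θ) with hG
  have hGd : ∀ s : ℝ, 0 < s →
      HasDerivAt G (s ^ (-θ - 1) * (f s * s - θ * F s)) s := by
    intro s hs
    have hp : HasDerivAt (fun x : ℝ => x ^ (-θ)) (-θ * s ^ (-θ - 1)) s :=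
      Real.hasDerivAt_rpow_const (Or.inl hs.ne')
    have := (hFd s).mul hp
    refine this.congr_deriv ?_
    have hsp : s ^ (-θ) = s ^ (-θ - 1) * s := by
      rw [← Real.rpow_add_one hs.ne' (-θ - 1)]
      ring_nf
    rw [hsp]; ring
  have hmono : MonotoneOn G (Ici (1:ℝ)) := by
    apply monotoneOn_of_deriv_nonneg (convex_Ici 1)
    · intro x hx
      have hx1 : (0:ℝ) < x := lt_of_lt_of_le one_pos hx
      exact ((hGd x hx1).continuousAt).continuousWithinAt
    · intro x hx
      rw [interior_Ici] at hx
      exact ((hGd x (lt_trans one_pos hx)).differentiableAt).differentiableWithinAt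
    · intro x hx
      rw [interior_Ici] at hx
      have hx0 : (0:ℝ) < x := lt_trans one_pos hx
      rw [((hGd x hx0).deriv)]
      have h1 := hAR x hx0.ne'
      exact mul_nonneg (Real.rpow_pos_of_pos hx0 _).le (by linarith [h1.2])
  intro t ht
  have := hmono (self_mem_Ici) (show t ∈ Ici (1:ℝ) from ht) ht
  simp only [hG, Real.rpow_neg_one] at this
  have hG1 : F 1 * (1:ℝ) ^ (-θ) = F 1 := by simp
  have htp : (0:ℝ) < t := lt_of_lt_of_le one_pos ht
  have htθ : (0:ℝ) < t ^ θ := Real.rpow_pos_of_pos htp θ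
  have key : F 1 ≤ F t * t ^ (-θ) := by
    calc F 1 = F 1 * (1:ℝ) ^ (-θ) := by simp
    _ ≤ F t * t ^ (-θ) := this
  have : F 1 * t ^ θ ≤ F t * t ^ (-θ) * t ^ θ :=
    mul_le_mul_of_nonneg_right key htθ.le
  calc F 1 * t ^ θ ≤ F t * t ^ (-θ) * t ^ θ := this
    _ = F t := by
        rw [mul_assoc, ← Real.rpow_add htp]
        simp

theorem stmt_8 (f F : ℝ → ℝ) (θ : ℝ) (hθ : 0 < θ)
    (hf : Continuous f)
    (hF : ∀ t : ℝ, F t = ∫ τ in (0:ℝ)..t, f τ)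
    (hAR : ∀ t : ℝ, t ≠ 0 → 0 < θ * F t ∧ θ * F t ≤ f t * t) :
    ∃ C > (0:ℝ), ∀ t : ℝ, 1 ≤ |t| → C * |t| ^ θ ≤ F t := by
  -- positive side
  have hpos := stmt_8_aux f F θ hθ hf hF hAR
  -- negative side via reflection
  set g : ℝ → ℝ := fun s => -f (-s) with hg
  set G : ℝ → ℝ := fun s => F (-s) with hGdef
  have hg_cont : Continuous g := (hf.comp continuous_neg).neg
  have hGint : ∀ t : ℝ, G t = ∫ τ in (0:ℝ)..t, g τ := by
    intro t
    have h1 : (∫ τ in (0:ℝ)..t, g τ) = -∫ τ in (0:ℝ)..t, f (-τ) := by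
      simp [hg, intervalIntegral.integral_neg]
    rw [h1, intervalIntegral.integral_comp_neg f]
    simp only [neg_zero]
    rw [intervalIntegral.integral_symm]
    simp [hGdef, hF]
  have hGAR : ∀ t : ℝ, t ≠ 0 → 0 < θ * G t ∧ θ * G t ≤ g t * t := by
    intro t ht
    have h := hAR (-t) (neg_ne_zero.mpr ht)
    refine ⟨h.1, ?_⟩
    have := h.2
    simp only [hg, hGdef]
    nlinarith [h.2]
  have hneg := stmt_8_aux g G θ hθ hg_cont hGint hGAR
  have hF1 : 0 < F 1 := by
    have h := (hAR 1 one_ne_zero).1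
    nlinarith
  have hG1 : 0 < G 1 := by
    have h := (hGAR 1 one_ne_zero).1
    nlinarith
  refine ⟨min (F 1) (G 1), lt_min hF1 hG1, ?_⟩
  intro t ht
  rcases le_or_gt 0 t with h0 | h0
  · have habs : |t| = t := abs_of_nonneg h0
    rw [habs] at ht ⊢
    calc min (F 1) (G 1) * t ^ θ ≤ F 1 * t ^ θ := by
          have := Real.rpow_pos_of_pos (lt_of_lt_of_le one_pos ht) θ
          nlinarith [min_le_left (F 1) (G 1)]
      _ ≤ F t := hpos t ht
  · have habs : |t| = -t := abs_of_neg h0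
    rw [habs] at ht ⊢
    have := hneg (-t) ht
    simp only [hGdef, neg_neg] at this
    calc min (F 1) (G 1) * (-t) ^ θ ≤ G 1 * (-t) ^ θ := by
          have := Real.rpow_pos_of_pos (lt_of_lt_of_le one_pos ht) θ
          nlinarith [min_le_right (F 1) (G 1)]
      _ ≤ F t := this
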